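/- For the set A_4 = {1, 4, 26, 35}: h₀ = 8 (i.e., every integer in [0, 35] is a sum of at most 8 elements of A_4 with repetition, but not every integer in [0, 35] is a sum of at most 7 such elements), and n(7, A_4) = 22 (every integer in [0,22] is a sum of at most 7 elements, but 23 is not). -/
import Mathlib


/-- `x` is a sum of at most `h` elements of `{a 1, ..., a k}` with repetition. -/
def IsRep (k : ℕ) (a : ℕ → ℕ) (h x : ℕ) : Prop :=
  ∃ c : ℕ → ℕ, (∑ i ∈ Finset.Icc 1 k, c i) ≤ h ∧ (∑ i ∈ Finset.Icc 1 k, c i * a i) = x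

/-- `n` is the `h`-range of `{a 1, ..., a k}`. -/
def IsRange (k : ℕ) (a : ℕ → ℕ) (h n : ℕ) : Prop :=
  (∀ x ≤ n, IsRep k a h x) ∧ ¬ IsRep k a h (n + 1)

/-- The set `A₄ = {1, 4, 26, 35}` (indexed from 1). -/
def A4a : ℕ → ℕ := fun i => [0, 1, 4, 26, 35].getD i 0

lemma sum4 (c : ℕ → ℕ) : (∑ i ∈ Finset.Icc 1 4, c i) = c 1 + c 2 + c 3 + c 4 := by
  show (Finset.Icc 1 4).sum c = _
  rw [show Finset.Icc 1 4 = {1,2,3,4} by rfl]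
  simp [Finset.sum_insert]
  ring

lemma rep (h x c1 c2 c3 c4 : ℕ) (h1 : c1+c2+c3+c4 ≤ h) (h2 : c1+4*c2+26*c3+35*c4 = x) :
    IsRep 4 A4a h x := by
  refine ⟨fun i => [0,c1,c2,c3,c4].getD i 0, ?_, ?_⟩
  · rw [sum4]; simpa using h1
  · rw [sum4]; simp [A4a]; omega

lemma not_rep7_23 : ¬ IsRep 4 A4a 7 23 := by
  rintro ⟨c, hle, heq⟩
  rw [sum4] at hle
  rw [sum4] at heq
  simp only [A4a] at heq
  norm_num at heq
  have h4 : c 4 = 0 := by omega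
  have h3 : c 3 = 0 := by omega
  omega

/-- For `A₄ = {1, 4, 26, 35}`: `h₀ = 8` (every integer in `[0, 35]` is a sum of at most 8
elements with repetition, but not every such integer is a sum of at most 7), and
`n(7, A₄) = 22` (every integer in `[0, 22]` is a sum of at most 7 elements, but 23 is not). -/
theorem stmt10 :
    (∀ x ≤ 35, IsRep 4 A4a 8 x) ∧
    (¬ ∀ x ≤ 35, IsRep 4 A4a 7 x) ∧
    (∀ x ≤ 22, IsRep 4 A4a 7 x) ∧
    ¬ IsRep 4 A4a 7 23 := by
  refine ⟨?_, ?_, ?_, not_rep7_23⟩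
  · intro x hx
    rcases le_or_gt x 25 with h | h
    · exact rep 8 x (x % 4) (x / 4) 0 0 (by omega) (by omega)
    · rcases le_or_gt x 34 with h2 | h2
      · exact rep 8 x ((x - 26) % 4) ((x - 26) / 4) 1 0 (by omega) (by omega)
      · exact rep 8 x 0 0 0 1 (by omega) (by omega)
  · intro hall
    exact not_rep7_23 (hall 23 (by omega))
  · intro x hx
    exact rep 7 x (x % 4) (x / 4) 0 0 (by omega) (by omega)
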